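/- For four pairwise distinct complex numbers a,b,c,d, the inserted points p_ab = f(d,a,b,c) and p_cd = f(b,c,d,a) satisfy cr(a, p_ab, b, p_cd) = -1, i.e., p_cd is the harmonic conjugate of p_ab with respect to a and b. -/

import Mathlib

open Complex

/-- Complex cross-ratio. -/
noncomputable def crC (a b c d : ℂ) : ℂ := (a - b) * (c - d) / ((b - c) * (d - a))

/-- Principal square root of the cross-ratio `cr(c,a,b,d)`. -/
noncomputable def sqrtQ (a b c d : ℂ) : ℂ := (crC c a b d) ^ ((1 : ℂ) / 2)

/-- The point-insertion rule. -/
noncomputable def fIns (a b c d : ℂ) : ℂ :=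
  (c * (b - a) * sqrtQ a b c d + b * (c - a)) / ((b - a) * sqrtQ a b c d + (c - a))

theorem stmt4 (a b c d : ℂ)
    (hab : a ≠ b) (hac : a ≠ c) (had : a ≠ d) (hbc : b ≠ c) (hbd : b ≠ d) (hcd : c ≠ d)
    (habcd : a + b - c - d ≠ 0)
    (hden1 : (a - d) * sqrtQ d a b c + (b - d) ≠ 0)
    (hden2 : (c - b) * sqrtQ b c d a + (d - b) ≠ 0)
    (hb : fIns d a b c - b ≠ 0) (ha : fIns b c d a - a ≠ 0) :
    crC a (fIns d a b c) b (fIns b c d a) = -1 := by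
  have hseq : sqrtQ b c d a = sqrtQ d a b c := by
    unfold sqrtQ crC
    congr 1
    have h1 : (d - b) * (c - a) = (b - d) * (a - c) := by ring
    have h2 : (b - c) * (a - d) = (d - a) * (c - b) := by ring
    rw [h1, h2]
  set s := sqrtQ d a b c with hs
  have hs2 : s ^ 2 = (b - d) * (a - c) / ((d - a) * (c - b)) := by
    have : s = ((b - d) * (a - c) / ((d - a) * (c - b))) ^ ((2 : ℕ) : ℂ)⁻¹ := by
      rw [hs]; unfold sqrtQ crC
      norm_num
    rw [this, Complex.cpow_nat_inv_pow _ (by norm_num : (2:ℕ) ≠ 0)]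
  have hda : d - a ≠ 0 := sub_ne_zero.mpr (Ne.symm had)
  have hcb : c - b ≠ 0 := sub_ne_zero.mpr (Ne.symm hbc)
  have key : (a - d) * (c - b) * s ^ 2 = -((b - d) * (a - c)) := by
    rw [hs2]; field_simp; ring
  have hPb : fIns d a b c - b = ((a - b) * (b - d)) / ((a - d) * s + (b - d)) := by
    unfold fIns; rw [← hseq, hseq]
    rw [← hs]
    field_simp
    ring
  have hden2' : (c - b) * s + (d - b) ≠ 0 := by rw [← hseq]; exact hden2
  have hQa : fIns b c d a - a = ((c - b) * (d - a) * s + (c - a) * (d - b)) /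
      ((c - b) * s + (d - b)) := by
    unfold fIns; rw [hseq]
    rw [div_sub' hden2']
    congr 1
    ring
  have haP : a - fIns d a b c = ((a - b) * (a - d) * s) / ((a - d) * s + (b - d)) := by
    unfold fIns; rw [← hseq, hseq]
    rw [sub_div' hden1]
    congr 1
    ring
  have hbQ : b - fIns b c d a = ((c - b) * (b - d) * (s + 1)) / ((c - b) * s + (d - b)) := by
    unfold fIns; rw [hseq]
    rw [sub_div' hden2']
    congr 1
    ring
  unfold crC
  rw [haP, hPb, hbQ, hQa]
  have hD : ((a - d) * s + (b - d)) * ((c - b) * s + (d - b)) ≠ 0 :=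
    mul_ne_zero hden1 hden2'
  have hY : (a - b) * (b - d) * ((c - b) * (d - a) * s + (c - a) * (d - b)) ≠ 0 := by
    intro h
    rcases mul_eq_zero.mp h with h1 | h2
    · exact (mul_ne_zero (sub_ne_zero.mpr hab) (sub_ne_zero.mpr hbd)) h1
    · apply ha
      rw [hQa, h2, zero_div]
  rw [div_mul_div_comm, div_mul_div_comm, div_div_div_cancel_right₀ hD]
  rw [div_eq_iff hY]
  linear_combination ((a - b) * (b - d)) * key
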